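/- For every positive integer n, Σ_{1≤a<b≤n} (1/6)(1/25)^{a-1}·(2/3)(1/25)^{n-b}·(2/5)(b-a)(1/25)^{b-a-1} = (5(n^3-n)/27)(1/25)^{n-1}. -/

import Mathlib

lemma gauss_aux (n : ℕ) : ∑ a ∈ Finset.Icc 1 n, ((n : ℚ) + 1 - a) = n * (n + 1) / 2 := by
  induction n with
  | zero => simp
  | succ n ih =>
    rw [Finset.sum_Icc_succ_top (by omega : 1 ≤ n + 1)]
    have h : ∑ a ∈ Finset.Icc 1 n, ((↑(n + 1) : ℚ) + 1 - a)
        = (∑ a ∈ Finset.Icc 1 n, ((n : ℚ) + 1 - a)) + n := by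
      calc ∑ a ∈ Finset.Icc 1 n, ((↑(n + 1) : ℚ) + 1 - a)
          = ∑ a ∈ Finset.Icc 1 n, (((n : ℚ) + 1 - a) + 1) := by
            apply Finset.sum_congr rfl; intro a _; push_cast; ring
        _ = _ := by
            rw [Finset.sum_add_distrib, Finset.sum_const, nsmul_eq_mul, Nat.card_Icc]
            norm_num
    rw [h, ih]; push_cast; ring

/-- `K_{0,0} = ∑_{1 ≤ a < b ≤ n} (1/6)(1/25)^{a-1} · (2/3)(1/25)^{n-b} · (2/5)(b-a)(1/25)^{b-a-1}`
    `= (5(n³-n)/27)(1/25)^{n-1}`. -/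
theorem K00_identity (n : ℕ) (hn : 0 < n) :
    ∑ b ∈ Finset.Icc 1 n, ∑ a ∈ Finset.Icc 1 (b - 1),
        (1 / 6 : ℚ) * (1 / 25) ^ (a - 1) * (2 / 3 * (1 / 25) ^ (n - b)) *
          (2 / 5 * ((b : ℚ) - a) * (1 / 25) ^ (b - a - 1))
      = 5 * ((n : ℚ) ^ 3 - n) / 27 * (1 / 25) ^ (n - 1) := by
  clear hn
  induction n with
  | zero => simp
  | succ n ih =>
    rw [Finset.sum_Icc_succ_top (by omega : 1 ≤ n + 1)]
    have h1 : ∑ b ∈ Finset.Icc 1 n, ∑ a ∈ Finset.Icc 1 (b - 1),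
        (1 / 6 : ℚ) * (1 / 25) ^ (a - 1) * (2 / 3 * (1 / 25) ^ (n + 1 - b)) *
          (2 / 5 * ((b : ℚ) - a) * (1 / 25) ^ (b - a - 1))
        = (1 / 25) * ∑ b ∈ Finset.Icc 1 n, ∑ a ∈ Finset.Icc 1 (b - 1),
        (1 / 6 : ℚ) * (1 / 25) ^ (a - 1) * (2 / 3 * (1 / 25) ^ (n - b)) *
          (2 / 5 * ((b : ℚ) - a) * (1 / 25) ^ (b - a - 1)) := by
      rw [Finset.mul_sum]
      apply Finset.sum_congr rfl; intro b hb
      rw [Finset.mul_sum]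
      apply Finset.sum_congr rfl; intro a _
      have hb' : b ≤ n := (Finset.mem_Icc.mp hb).2
      have he : n + 1 - b = (n - b) + 1 := by omega
      rw [he, pow_succ]; ring
    have h2 : ∑ a ∈ Finset.Icc 1 (n + 1 - 1),
        (1 / 6 : ℚ) * (1 / 25) ^ (a - 1) * (2 / 3 * (1 / 25) ^ (n + 1 - (n + 1))) *
          (2 / 5 * ((↑(n + 1) : ℚ) - a) * (1 / 25) ^ (n + 1 - a - 1))
        = (2 / 45) * (1 / 25) ^ (n - 1) * (n * (n + 1) / 2) := by
      have hs : Finset.Icc 1 (n + 1 - 1) = Finset.Icc 1 n := by norm_num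
      rw [hs]
      have : ∑ a ∈ Finset.Icc 1 n,
          (1 / 6 : ℚ) * (1 / 25) ^ (a - 1) * (2 / 3 * (1 / 25) ^ (n + 1 - (n + 1))) *
            (2 / 5 * ((↑(n + 1) : ℚ) - a) * (1 / 25) ^ (n + 1 - a - 1))
          = (2 / 45) * (1 / 25) ^ (n - 1) * ∑ a ∈ Finset.Icc 1 n, ((n : ℚ) + 1 - a) := by
        rw [Finset.mul_sum]
        apply Finset.sum_congr rfl; intro a ha
        obtain ⟨ha1, ha2⟩ := Finset.mem_Icc.mp ha
        have he1 : n + 1 - (n + 1) = 0 := by omega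
        have he2 : n + 1 - a - 1 = n - a := by omega
        have he3 : (a - 1) + (n - a) = n - 1 := by omega
        rw [he1, he2, ← he3, pow_add, pow_zero]
        push_cast; ring
      rw [this, gauss_aux]
    rw [h1, ih, h2]
    rcases n with _ | m
    · norm_num
    · have : m + 1 + 1 - 1 = (m + 1 - 1) + 1 := by omega
      rw [this, pow_succ]
      push_cast; ring
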